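/- Fix a linear order on the ground set W = {w₁, …, w_N} of a simple matroid, and order finite subsets X ⊆ W by the binary label L(X) = Σ_{w_i ∈ X} 2^{i-1}. If B is the basis of a flat F of rank n ≥ 1 with minimal label among all bases of F (the 'pointer' of F), and w_k is the element of B with the largest index, then B \ {w_k} is the minimal-label basis of the flat cl(B \ {w_k}), which has rank n−1. -/

import Mathlib

/-- The rank of a set `X` in a matroid `M`. -/
noncomputable def mRank {α : Type*} (M : Matroid α) (X : Set α) : ℕ :=
  sSup {n | ∃ I, M.Indep I ∧ I ⊆ X ∧ I.ncard = n}

/-- The binary label of a subset of the ordered ground set `Fin N`: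
bit `i` is set iff `wᵢ` belongs to the set. -/
noncomputable def label {N : ℕ} (X : Set (Fin N)) : ℕ :=
  ∑ i : Fin N, Set.indicator X (fun i => 2 ^ (i : ℕ)) i

lemma label_insert {N : ℕ} (X : Set (Fin N)) (k : Fin N) (hk : k ∉ X) :
    label (insert k X) = 2 ^ (k : ℕ) + label X := by
  classical
  unfold label
  have h1 : (2:ℕ)^(k:ℕ) + ∑ i : Fin N, X.indicator (fun i => 2 ^ (i:ℕ)) i
      = ∑ i : Fin N, ((({k}:Set (Fin N)).indicator (fun i => 2 ^ (i:ℕ)) i)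
          + X.indicator (fun i => 2 ^ (i:ℕ)) i) := by
    rw [Finset.sum_add_distrib]
    congr 1
    rw [Finset.sum_eq_single k]
    · simp
    · intro b _ hb; simp [Set.indicator_apply, hb]
    · simp
  rw [h1]
  apply Finset.sum_congr rfl
  intro i _
  by_cases hik : i = k
  · subst hik; simp [Set.indicator_apply, hk]
  · simp [Set.indicator_apply, hik, Set.mem_insert_iff]

lemma mRank_eq_of_basis {N : ℕ} (M : Matroid (Fin N)) (hE : M.E = Set.univ)
    {B X : Set (Fin N)} (hB : M.IsBasis B X) : mRank M X = B.ncard := by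
  apply le_antisymm
  · refine csSup_le ⟨0, ∅, M.empty_indep, Set.empty_subset _, by simp⟩ ?_
    rintro m ⟨I, hI, hIX, rfl⟩
    obtain ⟨J, hJ, hIJ⟩ := hI.subset_isBasis_of_subset hIX (by rw [hE]; exact Set.subset_univ _)
    calc I.ncard ≤ J.ncard := Set.ncard_le_ncard hIJ (Set.toFinite J)
    _ = B.ncard := by
        have := hJ.encard_eq_encard hB
        rw [Set.ncard_def, Set.ncard_def, this]
  · apply le_csSup
    · refine ⟨X.ncard, ?_⟩
      rintro m ⟨I, hI, hIX, rfl⟩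
      exact Set.ncard_le_ncard hIX (Set.toFinite X)
    · exact ⟨B, hB.indep, hB.subset, rfl⟩

/-- If `B` is the minimal-label basis (the pointer) of a flat `F` of rank
`n ≥ 1` in a simple matroid, and `k` is the element of `B` with largest index,
then `B \ {k}` is the minimal-label basis of the flat `cl(B \ {k})`, which has
rank `n - 1`. -/
theorem pointer_delete_top {N : ℕ} (M : Matroid (Fin N)) [M.Finite]
    (hE : M.E = Set.univ)
    (hsimple : ∀ X : Set (Fin N), X.ncard ≤ 2 → M.Indep X)
    (F : Set (Fin N)) (hF : M.IsFlat F) (n : ℕ) (hn : 1 ≤ n)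
    (hrank : mRank M F = n)
    (B : Set (Fin N)) (hB : M.IsBasis B F)
    (hmin : ∀ B', M.IsBasis B' F → label B ≤ label B')
    (k : Fin N) (hk : k ∈ B) (hktop : ∀ j ∈ B, j ≤ k) :
    M.IsBasis (B \ {k}) (M.closure (B \ {k})) ∧
    mRank M (M.closure (B \ {k})) = n - 1 ∧
    ∀ B', M.IsBasis B' (M.closure (B \ {k})) → label (B \ {k}) ≤ label B' := by
  have hBcard : B.ncard = n := by rw [← hrank, mRank_eq_of_basis M hE hB]
  have hB'indep : M.Indep (B \ {k}) := hB.indep.subset Set.diff_subset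
  have hbasis : M.IsBasis (B \ {k}) (M.closure (B \ {k})) := hB'indep.isBasis_closure
  have hins : insert k (B \ {k}) = B := Set.insert_diff_singleton.trans (Set.insert_eq_of_mem hk)
  have hknot : k ∉ M.closure (B \ {k}) := hB.indep.notMem_closure_sdiff_of_mem hk
  have hclF : M.closure B = F := by
    rw [hB.closure_eq_closure, hF.closure]
  refine ⟨hbasis, ?_, ?_⟩
  · rw [mRank_eq_of_basis M hE hbasis, Set.ncard_diff_singleton_of_mem hk, hBcard]
  · intro B' hB'
    have hclB' : M.closure B' = M.closure (B \ {k}) := hB'.closure_eq_right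
    have hkB' : k ∉ B' := fun h => hknot (hB'.subset h)
    have hkclB' : k ∉ M.closure B' := by rwa [hclB']
    have hindep : M.Indep (insert k B') := by
      rw [hB'.indep.insert_indep_iff_of_notMem hkB']
      exact ⟨by rw [hE]; trivial, hkclB'⟩
    have hclins : M.closure (insert k B') = F := by
      rw [← M.closure_insert_closure_eq_closure_insert, hclB',
        M.closure_insert_closure_eq_closure_insert, hins, hclF]
    have hbas : M.IsBasis (insert k B') F := by
      have := hindep.isBasis_closure
      rwa [hclins] at this
    have := hmin _ hbas
    rw [label_insert B' k hkB', ← hins, label_insert _ k (by simp)] at this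
    omega
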